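/- Let c be a sequence with c_j* ≤ c_j ≤ c_j*(1+o(1)) and let ρ be defined by ρ_1 = 2 and ρ_{j+1} = σ + 2^{i*(ρ_j)} + (c_j − i*(ρ_j) − σ)·ρ_j, where i*(x) = 0 if x ≤ σ and i*(x) = ⌈log₂(x−σ)⌉ otherwise. Then for all j ≥ 2, ρ_{j+1} = (c_j − log₂ρ_j + O(1))·ρ_j ≤ c_j·ρ_j; in particular ρ_{j+1} ≤ c_j·ρ_j whenever ρ_j = Ω(log n) is sufficiently large relative to σ. -/

import Mathlib

/-- `i*(x) = 0` if `x ≤ σ`, and `⌈log₂(x − σ)⌉` otherwise. -/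
def istar (σ : ℕ) (x : ℕ) : ℕ := if x ≤ σ then 0 else Nat.clog 2 (x - σ)

/-- `2^(⌈log₂ m⌉ - 1) < m` rephrased with `- 1`. -/
lemma pow_clog_sub_one_lt {m : ℕ} (hm : 2 ≤ m) : 2 ^ (Nat.clog 2 m - 1) < m := by
  have := Nat.pow_pred_clog_lt_self (b := 2) one_lt_two hm
  simpa [Nat.pred_eq_sub_one] using this

/-- `2^⌈log₂ m⌉ ≤ 2m` for `m ≥ 1`. -/
lemma pow_clog_le_two_mul {m : ℕ} (hm : 1 ≤ m) : 2 ^ Nat.clog 2 m ≤ 2 * m := by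
  rcases eq_or_lt_of_le hm with h | h
  · simp [← h]
  · have h1 := pow_clog_sub_one_lt h
    have hp : 0 < Nat.clog 2 m := Nat.clog_pos one_lt_two h
    have h2 : 2 ^ Nat.clog 2 m = 2 * 2 ^ (Nat.clog 2 m - 1) := by
      rw [← pow_succ']
      congr 1
      omega
    omega

/-- `⌈log₂ m⌉ ≤ ⌊log₂ m⌋ + 1`. -/
lemma clog_le_log_succ (m : ℕ) : Nat.clog 2 m ≤ Nat.log 2 m + 1 := by
  rcases Nat.lt_or_ge m 2 with h | h
  · interval_cases m <;> simp
  · have h1 := pow_clog_sub_one_lt h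
    have hp : 0 < Nat.clog 2 m := Nat.clog_pos one_lt_two h
    have h2 : Nat.clog 2 m - 1 ≤ Nat.log 2 m :=
      (Nat.le_log_iff_pow_le one_lt_two (by omega)).2 (le_of_lt h1)
    omega

theorem stmt10 (σ : ℕ) (hσ : 1 ≤ σ) (c ρ : ℕ → ℕ) (hc : ∀ j, 2 ≤ c j)
    (hρ1 : ρ 1 = 2)
    (hrec : ∀ j, 1 ≤ j →
      ρ (j + 1) = σ + 2 ^ istar σ (ρ j) + (c j - istar σ (ρ j) - σ) * ρ j) :
    (∃ C : ℕ, ∀ j, 2 ≤ j →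
      (c j - Nat.log 2 (ρ j) - C) * ρ j ≤ ρ (j + 1) ∧
      ρ (j + 1) ≤ (c j - Nat.log 2 (ρ j) + C) * ρ j) ∧
    (∀ j, 2 ≤ j → σ + 2 ≤ ρ j → ρ (j + 1) ≤ c j * ρ j) := by
  -- for j ≥ 2, ρ j ≥ σ + 1
  have hge : ∀ j, 2 ≤ j → σ + 1 ≤ ρ j := by
    intro j hj
    obtain ⟨k, rfl⟩ : ∃ k, j = k + 1 := ⟨j - 1, by omega⟩
    rw [hrec k (by omega)]
    have : 1 ≤ 2 ^ istar σ (ρ k) := Nat.one_le_two_pow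
    omega
  constructor
  · -- the O(1) bounds
    refine ⟨σ + Nat.log 2 σ + 5, fun j hj => ?_⟩
    have hx : σ + 1 ≤ ρ j := hge j hj
    have hi : istar σ (ρ j) = Nat.clog 2 (ρ j - σ) := by
      unfold istar
      rw [if_neg (by omega)]
    -- istar ≤ log + 1
    have hiL : istar σ (ρ j) ≤ Nat.log 2 (ρ j) + 1 := by
      rw [hi]
      calc Nat.clog 2 (ρ j - σ) ≤ Nat.log 2 (ρ j - σ) + 1 := clog_le_log_succ _
        _ ≤ Nat.log 2 (ρ j) + 1 := by
            have := Nat.log_mono_right (b := 2) (Nat.sub_le (ρ j) σ)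
            omega
    -- log ≤ istar + log2 σ + 2
    have hLi : Nat.log 2 (ρ j) ≤ istar σ (ρ j) + Nat.log 2 σ + 2 := by
      rcases Nat.lt_or_ge (ρ j) (2 * σ + 1) with h | h
      · have h1 : σ < 2 ^ (Nat.log 2 σ + 1) := Nat.lt_pow_succ_log_self one_lt_two σ
        have h2 : ρ j < 2 ^ (Nat.log 2 σ + 2) := by
          calc ρ j ≤ 2 * σ := by omega
            _ < 2 * 2 ^ (Nat.log 2 σ + 1) := by omega
            _ = 2 ^ (Nat.log 2 σ + 2) := by ring
        have := Nat.log_lt_of_lt_pow (by omega : ρ j ≠ 0) h2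
        omega
      · have h1 : ρ j - σ ≤ 2 ^ Nat.clog 2 (ρ j - σ) := Nat.le_pow_clog one_lt_two _
        have h2 : ρ j < 2 ^ (istar σ (ρ j) + 2) := by
          rw [hi]
          have hpos : (0:ℕ) < 2 ^ Nat.clog 2 (ρ j - σ) := Nat.pow_pos (by norm_num)
          calc ρ j ≤ 2 * (ρ j - σ) := by omega
            _ ≤ 2 * 2 ^ Nat.clog 2 (ρ j - σ) := by omega
            _ < 4 * 2 ^ Nat.clog 2 (ρ j - σ) := by omega
            _ = 2 ^ (Nat.clog 2 (ρ j - σ) + 2) := by ring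
        have := Nat.log_lt_of_lt_pow (by omega : ρ j ≠ 0) h2
        omega
    -- 2^istar ≤ 2 ρ j
    have hpow : 2 ^ istar σ (ρ j) ≤ 2 * ρ j := by
      rw [hi]
      calc 2 ^ Nat.clog 2 (ρ j - σ) ≤ 2 * (ρ j - σ) := pow_clog_le_two_mul (by omega)
        _ ≤ 2 * ρ j := by omega
    rw [hrec j (by omega)]
    constructor
    · -- lower bound
      have h1 : c j - Nat.log 2 (ρ j) - (σ + Nat.log 2 σ + 5) ≤ c j - istar σ (ρ j) - σ := by
        omega
      calc (c j - Nat.log 2 (ρ j) - (σ + Nat.log 2 σ + 5)) * ρ j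
          ≤ (c j - istar σ (ρ j) - σ) * ρ j := Nat.mul_le_mul_right _ h1
        _ ≤ σ + 2 ^ istar σ (ρ j) + (c j - istar σ (ρ j) - σ) * ρ j := Nat.le_add_left _ _
    · -- upper bound
      have h1 : (c j - istar σ (ρ j) - σ) + (σ + 3)
          ≤ c j - Nat.log 2 (ρ j) + (σ + Nat.log 2 σ + 5) := by omega
      have h2 : ((c j - istar σ (ρ j) - σ) + (σ + 3)) * ρ j
          ≤ (c j - Nat.log 2 (ρ j) + (σ + Nat.log 2 σ + 5)) * ρ j :=
        Nat.mul_le_mul_right _ h1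
      have h3 : ((c j - istar σ (ρ j) - σ) + (σ + 3)) * ρ j
          = (c j - istar σ (ρ j) - σ) * ρ j + σ * ρ j + 3 * ρ j := by ring
      have h4 : σ ≤ σ * ρ j := Nat.le_mul_of_pos_right σ (by omega)
      omega
  · -- second part
    intro j hj hx2
    have hi : istar σ (ρ j) = Nat.clog 2 (ρ j - σ) := by
      unfold istar
      rw [if_neg (by omega)]
    have him : 2 ≤ ρ j - σ := by omega
    have hip : 1 ≤ istar σ (ρ j) := by
      rw [hi]; exact Nat.clog_pos one_lt_two him
    have hpow : σ + 2 ^ istar σ (ρ j) ≤ 2 * ρ j := by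
      rw [hi]
      have h1 := pow_clog_sub_one_lt him
      have hp : 0 < Nat.clog 2 (ρ j - σ) := Nat.clog_pos one_lt_two him
      have h2 : 2 ^ Nat.clog 2 (ρ j - σ) = 2 * 2 ^ (Nat.clog 2 (ρ j - σ) - 1) := by
        rw [← pow_succ']
        congr 1
        omega
      omega
    rw [hrec j (by omega)]
    have hcj := hc j
    have h1 : (c j - istar σ (ρ j) - σ) + 2 ≤ c j := by omega
    have h2 : ((c j - istar σ (ρ j) - σ) + 2) * ρ j ≤ c j * ρ j := Nat.mul_le_mul_right _ h1
    have h3 : ((c j - istar σ (ρ j) - σ) + 2) * ρ j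
        = (c j - istar σ (ρ j) - σ) * ρ j + 2 * ρ j := by ring
    omega
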